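/- Let a, b be real numbers with 0 ≤ a ≤ b. A nonnegative real number x belongs to the additive submonoid of ℝ generated by Set.Icc a b if and only if there exists a natural number k such that k*a ≤ x and x ≤ k*b. -/

import Mathlib

theorem mem_addClosure_Icc_real_iff (a b : ℝ) (ha : 0 ≤ a) (hab : a ≤ b)
    (x : ℝ) (hx : 0 ≤ x) :
    x ∈ AddSubmonoid.closure (Set.Icc a b) ↔
      ∃ k : ℕ, (k : ℝ) * a ≤ x ∧ x ≤ (k : ℝ) * b := by
  constructor
  · intro h
    induction h using AddSubmonoid.closure_induction with
    | mem y hy => exact ⟨1, by simpa using hy.1, by simpa using hy.2⟩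
    | zero => exact ⟨0, by simp⟩
    | add y z hy hz ihy ihz =>
      have hnn : ∀ w ∈ AddSubmonoid.closure (Set.Icc a b), (0:ℝ) ≤ w := by
        intro w hw
        induction hw using AddSubmonoid.closure_induction with
        | mem u hu => linarith [hu.1]
        | zero => simp
        | add u v _ _ ihu ihv => linarith
      obtain ⟨k1, h1, h2⟩ := ihy (hnn y hy)
      obtain ⟨k2, h3, h4⟩ := ihz (hnn z hz)
      exact ⟨k1 + k2, by push_cast; nlinarith, by push_cast; nlinarith⟩
  · rintro ⟨k, h1, h2⟩
    rcases Nat.eq_zero_or_pos k with rfl | hk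
    · simp at h1 h2
      have : x = 0 := le_antisymm h2 h1
      simp [this]
    · have hkpos : (0:ℝ) < k := by exact_mod_cast hk
      have hmem : x / k ∈ Set.Icc a b :=
        ⟨by rw [le_div_iff₀ hkpos]; linarith [mul_comm (k:ℝ) a],
         by rw [div_le_iff₀ hkpos]; linarith [mul_comm (k:ℝ) b]⟩
      have := AddSubmonoid.nsmul_mem (AddSubmonoid.closure (Set.Icc a b))
        (AddSubmonoid.subset_closure hmem) k
      rwa [nsmul_eq_mul, mul_div_cancel₀ _ (ne_of_gt hkpos)] at this
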